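/- Let f ∈ SD²_{d−1}(0+) with d ∈ (0,1) and g_δ(t,v) = [f(t+δ, t−δv) − f(t, t−δv)] / f(t+δ, t). Then for every h₀ ∈ (0,1]: lim_{δ↓0} sup_{h₀ ≤ t ≤ 1} ∫_{h₀/δ}^{t/δ} |g_δ(t,v)| dv = 0. -/

import Mathlib

open MeasureTheory ProbabilityTheory Filter Set intervalIntegral Real

/-- `p01 F t r = ∂F/∂r (t,r)` -/
noncomputable def p01 (F : ℝ → ℝ → ℝ) (t r : ℝ) : ℝ := deriv (fun x => F t x) r
/-- `p10 F t r = ∂F/∂t (t,r)` -/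
noncomputable def p10 (F : ℝ → ℝ → ℝ) (t r : ℝ) : ℝ := deriv (fun x => F x r) t
/-- `p11 F t r = ∂²F/∂t∂r (t,r)` -/
noncomputable def p11 (F : ℝ → ℝ → ℝ) (t r : ℝ) : ℝ := deriv (fun x => p01 F x r) t
/-- `p02 F t r = ∂²F/∂r² (t,r)` -/
noncomputable def p02 (F : ℝ → ℝ → ℝ) (t r : ℝ) : ℝ := deriv (fun x => p01 F t x) r

/-- `lim_{h↓0} sup_{t∈K} |G h t + c| = 0` for every compact `K ⊂ ℝ`. -/
def UnifDiagLimit (G : ℝ → ℝ → ℝ) (c : ℝ) : Prop :=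
  ∀ K : Set ℝ, IsCompact K → ∀ ε > 0, ∃ h₀ > 0, ∀ h : ℝ, 0 < h → h < h₀ →
    ∀ t ∈ K, |G h t + c| < ε

/-- `F ∈ SR²_ρ(0+)` : a function of smooth variation of index `ρ` at the diagonal. -/
def SmoothVar (F : ℝ → ℝ → ℝ) (ρ : ℝ) : Prop :=
  ContinuousOn (fun p : ℝ × ℝ => F p.1 p.2) {p : ℝ × ℝ | p.2 ≤ p.1} ∧
  ContDiffOn ℝ 2 (fun p : ℝ × ℝ => F p.1 p.2) {p : ℝ × ℝ | p.2 < p.1} ∧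
  (∀ t r : ℝ, r < t → 0 < F t r) ∧
  UnifDiagLimit (fun h t => h * p01 F t (t - h) / F t (t - h)) ρ ∧
  UnifDiagLimit (fun h t => h * p10 F (t + h) t / F (t + h) t) (-ρ) ∧
  UnifDiagLimit (fun h t => h ^ 2 * p11 F t (t - h) / F t (t - h)) (ρ * (ρ - 1)) ∧
  UnifDiagLimit (fun h t => h ^ 2 * p02 F t (t - h) / F t (t - h)) (-(ρ * (ρ - 1)))

set_option maxHeartbeats 2000000 in
/-- Lemma 5(a): for every `h₀ ∈ (0,1]`,
`lim_{δ↓0} sup_{h₀ ≤ t ≤ 1} ∫_{h₀/δ}^{t/δ} |g_δ(t,v)| dv = 0`. -/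
theorem lemma5a (d : ℝ) (hd : d ∈ Set.Ioo (0:ℝ) 1)
    (F : ℝ → ℝ → ℝ) (hF : SmoothVar F d)
    (f : ℝ → ℝ → ℝ) (hf : ∀ t r : ℝ, f t r = p01 F t r) :
    ∀ h₀ ∈ Set.Ioc (0:ℝ) 1, ∀ ε > (0:ℝ), ∃ δ₀ > (0:ℝ), ∀ δ : ℝ, 0 < δ → δ < δ₀ →
      ∀ t ∈ Set.Icc h₀ 1,
        (∫ v in (h₀ / δ)..(t / δ),
          |(f (t + δ) (t - δ * v) - f t (t - δ * v)) / f (t + δ) t|) < ε := by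
  obtain ⟨hd0, hd1⟩ := hd
  obtain ⟨hcont, hC2, hpos, h01, -, -, -⟩ := hF
  intro h₀ hh₀ ε hε
  obtain ⟨hh₀0, hh₀1⟩ := hh₀
  set G : ℝ × ℝ → ℝ := fun p => F p.1 p.2 with hGdef
  have hU : IsOpen {p : ℝ × ℝ | p.2 < p.1} := isOpen_lt continuous_snd continuous_fst
  set f₁ : ℝ × ℝ → ℝ := fun p => fderiv ℝ G p (0, 1) with hf₁def
  -- slice derivative in the second variable
  have key : ∀ t r : ℝ, r < t → HasDerivAt (fun x => F t x) (f₁ (t, r)) r := by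
    intro t r h
    have hdG : DifferentiableAt ℝ G (t, r) :=
      (hC2.differentiableOn (by norm_num)).differentiableAt (hU.mem_nhds h)
    have h2 : HasDerivAt (fun x : ℝ => ((t : ℝ), x)) ((0 : ℝ), (1 : ℝ)) r :=
      HasDerivAt.prodMk (hasDerivAt_const _ _) (hasDerivAt_id _)
    exact hdG.hasFDerivAt.comp_hasDerivAt r h2
  have hp01 : ∀ t r : ℝ, r < t → p01 F t r = f₁ (t, r) := fun t r h => (key t r h).deriv
  -- f₁ is C¹ on U
  have hf₁C : ContDiffOn ℝ 1 f₁ {p : ℝ × ℝ | p.2 < p.1} := by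
    have h1 : ContDiffOn ℝ 1 (fderiv ℝ G) {p : ℝ × ℝ | p.2 < p.1} :=
      hC2.fderiv_of_isOpen hU (by norm_num)
    exact (ContinuousLinearMap.apply ℝ ℝ ((0:ℝ), (1:ℝ))).contDiff.comp_contDiffOn h1
  have hf₁d : ∀ p : ℝ × ℝ, p.2 < p.1 → DifferentiableAt ℝ f₁ p := fun p hp =>
    (hf₁C.differentiableOn one_ne_zero).differentiableAt (hU.mem_nhds hp)
  -- slice derivative of f₁ in the first variable
  have keyS : ∀ s r : ℝ, r < s →
      HasDerivAt (fun x => f₁ (x, r)) (fderiv ℝ f₁ (s, r) (1, 0)) s := by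
    intro s r h
    have h2 : HasDerivAt (fun x : ℝ => (x, (r : ℝ))) ((1 : ℝ), (0 : ℝ)) s :=
      HasDerivAt.prodMk (hasDerivAt_id _) (hasDerivAt_const _ _)
    exact (hf₁d (s, r) h).hasFDerivAt.comp_hasDerivAt s h2
  -- derivative of h ↦ F t' (t' - h)
  have hψ : ∀ t' h : ℝ, 0 < h →
      HasDerivAt (fun x => F t' (t' - x)) (-(f₁ (t', t' - h))) h := by
    intro t' h hh
    have h2 : HasDerivAt (fun x : ℝ => t' - x) (-1) h := by
      exact (hasDerivAt_id' h).const_sub t'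
    have := (key t' (t' - h) (by linarith)).comp h h2
    simpa [Function.comp_def] using this
  -- compact region away from the diagonal and Lipschitz bound C'
  set Kc : Set (ℝ × ℝ) :=
    {p : ℝ × ℝ | h₀ ≤ p.1} ∩ {p | p.1 ≤ 2} ∩ {p | 0 ≤ p.2} ∩ {p | p.2 + h₀ ≤ p.1} with hKcdef
  have hKcU : Kc ⊆ {p : ℝ × ℝ | p.2 < p.1} := by
    rintro p ⟨⟨⟨-, -⟩, -⟩, h4⟩
    exact lt_of_lt_of_le (lt_add_of_pos_right _ hh₀0) h4
  have hKcC : IsCompact Kc := by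
    have hclosed : IsClosed Kc :=
      (((isClosed_le continuous_const continuous_fst).inter
        (isClosed_le continuous_fst continuous_const)).inter
        (isClosed_le continuous_const continuous_snd)).inter
        (isClosed_le (continuous_snd.add continuous_const) continuous_fst)
    have hsub : Kc ⊆ Icc h₀ 2 ×ˢ Icc 0 2 := by
      rintro p ⟨⟨⟨h1, h2⟩, h3⟩, h4⟩
      exact ⟨⟨h1, h2⟩, h3, by simp only [mem_setOf_eq] at *; linarith⟩
    exact (isCompact_Icc.prod isCompact_Icc).of_isClosed_subset hclosed hsub
  have hfd_cont : ContinuousOn (fderiv ℝ f₁) {p : ℝ × ℝ | p.2 < p.1} :=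
    hf₁C.continuousOn_fderiv_of_isOpen hU (le_refl 1)
  obtain ⟨C0, hC0⟩ := hKcC.exists_bound_of_continuousOn (hfd_cont.mono hKcU)
  set C' : ℝ := max C0 0 with hC'def
  have hC'0 : 0 ≤ C' := le_max_right _ _
  have hC' : ∀ p ∈ Kc, ‖fderiv ℝ f₁ p‖ ≤ C' := fun p hp =>
    le_trans (hC0 p hp) (le_max_left _ _)
  -- parameters from the smooth-variation condition
  set ε₁ : ℝ := min d (1 - d) / 2 with hε₁def
  have hε₁0 : 0 < ε₁ := by
    have : 0 < min d (1 - d) := lt_min hd0 (by linarith)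
    positivity
  have hε₁d : ε₁ ≤ d / 2 := by
    have : min d (1 - d) ≤ d := min_le_left _ _
    rw [hε₁def]; linarith
  have hε₁d' : ε₁ ≤ (1 - d) / 2 := by
    have : min d (1 - d) ≤ 1 - d := min_le_right _ _
    rw [hε₁def]; linarith
  obtain ⟨h₁, hh₁0, hh₁⟩ := h01 (Icc h₀ 2) isCompact_Icc ε₁ hε₁0
  set q : ℝ := d + ε₁ with hqdef
  have hq0 : 0 < q := by positivity
  have hq1 : q < 1 := by rw [hqdef]; linarith
  set h₂ : ℝ := min h₁ 1 / 2 with hh₂def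
  have hh₂0 : 0 < h₂ := by
    have : 0 < min h₁ 1 := lt_min hh₁0 one_pos
    positivity
  have hh₂h₁ : h₂ < h₁ := by
    have h1 : min h₁ 1 ≤ h₁ := min_le_left _ _
    rw [hh₂def]; linarith
  have hh₂1 : h₂ ≤ 1 / 2 := by
    have h1 : min h₁ 1 ≤ 1 := min_le_right _ _
    rw [hh₂def]; linarith
  -- positive lower bound m for F at distance h₂ from the diagonal
  have hmc : ContinuousOn (fun t' : ℝ => F t' (t' - h₂)) (Icc h₀ 2) := by
    have h1 : ContinuousOn G {p : ℝ × ℝ | p.2 < p.1} := hC2.continuousOn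
    have h2 : Continuous (fun t' : ℝ => (t', t' - h₂)) :=
      continuous_id.prodMk (continuous_id.sub continuous_const)
    exact h1.comp h2.continuousOn
      (fun x _ => by simp only [mem_setOf_eq]; linarith)
  obtain ⟨t₀, ht₀, hmin⟩ := isCompact_Icc.exists_isMinOn
    (nonempty_Icc.mpr (by linarith)) hmc
  set m : ℝ := F t₀ (t₀ - h₂) with hmdef
  have hm0 : 0 < m := hpos _ _ (by linarith)
  have hmin' : ∀ t' ∈ Icc h₀ 2, m ≤ F t' (t' - h₂) := fun t' ht' => hmin ht'
  -- choose δ₀ via continuity of x ↦ (C'/B) x^(1-q) at 0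
  set B : ℝ := d / 2 * (m / h₂ ^ q) with hBdef
  have hB0 : 0 < B := by
    have : (0:ℝ) < h₂ ^ q := Real.rpow_pos_of_pos hh₂0 q
    positivity
  have hcont0 : Filter.Tendsto (fun x : ℝ => C' / B * x ^ (1 - q)) (nhds 0) (nhds 0) := by
    have h1 : ContinuousAt (fun x : ℝ => x ^ (1 - q)) 0 :=
      Real.continuousAt_rpow_const 0 (1 - q) (Or.inr (by linarith))
    have h2 := (h1.tendsto).const_mul (C' / B)
    rw [Real.zero_rpow (by linarith : (1:ℝ) - q ≠ 0), mul_zero] at h2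
    exact h2
  obtain ⟨δ₁, hδ₁0, hδ₁⟩ := Metric.eventually_nhds_iff.mp (hcont0.eventually (gt_mem_nhds hε))
  refine ⟨min δ₁ h₂, lt_min hδ₁0 hh₂0, ?_⟩
  intro δ hδ0 hδδ₀ t ht
  obtain ⟨ht1, ht2⟩ := ht
  have hδδ₁ : δ < δ₁ := lt_of_lt_of_le hδδ₀ (min_le_left _ _)
  have hδh₂ : δ < h₂ := lt_of_lt_of_le hδδ₀ (min_le_right _ _)
  have ht'mem : t + δ ∈ Icc h₀ 2 := ⟨by linarith, by linarith⟩
  have hFv : 0 < F (t + δ) t := hpos _ _ (by linarith)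
  -- lower bound on |f (t+δ) t|
  have hDneg : f (t + δ) t < 0 ∧ d / 2 * (F (t + δ) t / δ) ≤ -(f (t + δ) t) := by
    have := hh₁ δ hδ0 (by linarith) (t + δ) ht'mem
    simp only [show t + δ - δ = t by ring] at this
    rw [← hf (t + δ) t] at this
    rw [abs_lt] at this
    obtain ⟨-, h2⟩ := this
    have h3 : δ * f (t + δ) t / F (t + δ) t < -(d / 2) := by linarith
    have h4 : δ * f (t + δ) t < -(d / 2) * F (t + δ) t := by
      rw [div_lt_iff₀ hFv] at h3; linarith
    constructor
    · nlinarith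
    · have h5 : F (t + δ) t / δ * δ = F (t + δ) t := div_mul_cancel₀ _ hδ0.ne'
      nlinarith [h4, h5, hδ0]
  -- growth: F (t+δ) t ≥ m / h₂^q * δ^q
  have hgrow : m / h₂ ^ q * δ ^ q ≤ F (t + δ) t := by
    set t' := t + δ with ht'def
    set χ : ℝ → ℝ := fun x => F t' (t' - x) / x ^ q with hχdef
    have hder : ∀ x ∈ Icc δ h₂, HasDerivAt χ
        ((-(f₁ (t', t' - x)) * x ^ q - F t' (t' - x) * (q * x ^ (q - 1))) / (x ^ q) ^ 2) x := by
      intro x hx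
      have hx0 : 0 < x := lt_of_lt_of_le hδ0 hx.1
      exact (hψ t' x hx0).div (Real.hasDerivAt_rpow_const (Or.inl hx0.ne'))
        (ne_of_gt (Real.rpow_pos_of_pos hx0 q))
    have hderneg : ∀ x ∈ interior (Icc δ h₂), deriv χ x < 0 := by
      intro x hx
      rw [interior_Icc] at hx
      have hx0 : 0 < x := lt_trans hδ0 hx.1
      have hxh₁ : x < h₁ := lt_trans hx.2 hh₂h₁
      rw [(hder x (Ioo_subset_Icc_self hx)).deriv]
      have hFx : 0 < F t' (t' - x) := hpos _ _ (by linarith)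
      have hb : |x * f₁ (t', t' - x) / F t' (t' - x) + d| < ε₁ := by
        simpa only [hp01 t' (t' - x) (by linarith : t' - x < t')]
          using hh₁ x hx0 hxh₁ t' ht'mem
      rw [abs_lt] at hb
      have hkey : -(f₁ (t', t' - x)) * x < q * F t' (t' - x) := by
        have h5 : -q < x * f₁ (t', t' - x) / F t' (t' - x) := by
          rw [hqdef]; linarith [hb.1]
        rw [lt_div_iff₀ hFx] at h5
        nlinarith
      have hxq : x ^ q = x ^ (q - 1) * x := by
        rw [← Real.rpow_add_one hx0.ne' (q - 1)]
        norm_num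
      have hxq1 : 0 < x ^ (q - 1) := Real.rpow_pos_of_pos hx0 _
      have hxq0 : 0 < x ^ q := Real.rpow_pos_of_pos hx0 _
      have hre : -f₁ (t', t' - x) * x ^ q = -f₁ (t', t' - x) * x * x ^ (q - 1) := by
        rw [hxq]; ring
      apply div_neg_of_neg_of_pos
      · nlinarith [mul_lt_mul_of_pos_right hkey hxq1, hre]
      · positivity
    have hanti : StrictAntiOn χ (Icc δ h₂) :=
      strictAntiOn_of_deriv_neg (convex_Icc δ h₂)
        (fun x hx => ((hder x hx).differentiableAt.continuousAt).continuousWithinAt) hderneg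
    have hlt : χ h₂ < χ δ :=
      hanti (left_mem_Icc.mpr hδh₂.le) (right_mem_Icc.mpr hδh₂.le) hδh₂
    have hχδ : χ δ = F t' t / δ ^ q := by
      rw [hχdef]
      simp only [show t' - δ = t by rw [ht'def]; ring]
    have hχh₂ : m / h₂ ^ q ≤ χ h₂ := by
      have h6 := hmin' t' ht'mem
      show m / h₂ ^ q ≤ F t' (t' - h₂) / h₂ ^ q
      gcongr
    have hδq : 0 < δ ^ q := Real.rpow_pos_of_pos hδ0 q
    have : m / h₂ ^ q < F t' t / δ ^ q := by
      rw [← hχδ]; exact lt_of_le_of_lt hχh₂ hlt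
    calc m / h₂ ^ q * δ ^ q ≤ F t' t / δ ^ q * δ ^ q := by nlinarith
      _ = F t' t := div_mul_cancel₀ _ hδq.ne'
  -- Lipschitz bound on the numerator
  have hnum : ∀ r : ℝ, 0 ≤ r → r + h₀ ≤ t → |f (t + δ) r - f t r| ≤ C' * δ := by
    intro r hr0 hrt
    have hrt' : r < t := by linarith
    have hmem : ∀ s ∈ Icc t (t + δ), (s, r) ∈ Kc := by
      intro s hs
      obtain ⟨hs1, hs2⟩ := hs
      refine ⟨⟨⟨?_, ?_⟩, ?_⟩, ?_⟩ <;> simp only [mem_setOf_eq] <;> linarith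
    have hDW : ∀ s ∈ Icc t (t + δ), HasDerivWithinAt (fun x => f₁ (x, r))
        (fderiv ℝ f₁ (s, r) (1, 0)) (Icc t (t + δ)) s := by
      intro s hs
      exact (keyS s r (by linarith [hs.1])).hasDerivWithinAt
    have hbound : ∀ s ∈ Ico t (t + δ), ‖fderiv ℝ f₁ (s, r) (1, 0)‖ ≤ C' := by
      intro s hs
      calc ‖fderiv ℝ f₁ (s, r) (1, 0)‖ ≤ ‖fderiv ℝ f₁ (s, r)‖ * ‖((1:ℝ), (0:ℝ))‖ :=
            ContinuousLinearMap.le_opNorm _ _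
        _ ≤ C' * 1 := by
            refine mul_le_mul (hC' _ (hmem s (Ico_subset_Icc_self hs))) ?_
              (norm_nonneg _) hC'0
            simp [Prod.norm_def]
        _ = C' := mul_one _
    have hm := norm_image_sub_le_of_norm_deriv_le_segment' hDW hbound (t + δ)
      (right_mem_Icc.mpr (by linarith))
    rw [hf (t + δ) r, hf t r, hp01 (t + δ) r (by linarith), hp01 t r hrt']
    calc |f₁ (t + δ, r) - f₁ (t, r)| ≤ C' * (t + δ - t) := by
          simpa [Real.norm_eq_abs] using hm
      _ = C' * δ := by ring
  -- bound the integral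
  set A : ℝ := -(f (t + δ) t) with hAdef
  have hA0 : 0 < A := by rw [hAdef]; linarith [hDneg.1]
  have hδq : 0 < δ ^ q := Real.rpow_pos_of_pos hδ0 q
  have hAB : B * δ ^ q / δ ≤ A := by
    have h7 : B * δ ^ q / δ ≤ d / 2 * (F (t + δ) t / δ) := by
      have he : B * δ ^ q / δ = d / 2 * ((m / h₂ ^ q * δ ^ q) / δ) := by
        rw [hBdef]; ring
      rw [he]
      gcongr
    exact le_trans h7 hDneg.2
  have hAB0 : 0 < B * δ ^ q / δ := by positivity
  have hIoc : Set.uIoc (h₀ / δ) (t / δ) = Set.Ioc (h₀ / δ) (t / δ) :=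
    Set.uIoc_of_le (by gcongr)
  have hpoint : ∀ v ∈ Set.uIoc (h₀ / δ) (t / δ),
      ‖|(f (t + δ) (t - δ * v) - f t (t - δ * v)) / f (t + δ) t|‖ ≤ C' * δ / A := by
    intro v hv
    rw [hIoc] at hv
    obtain ⟨hv1, hv2⟩ := hv
    have hδv1 : h₀ < δ * v := by
      rw [div_lt_iff₀ hδ0] at hv1; linarith
    have hδv2 : δ * v ≤ t := by
      rw [le_div_iff₀ hδ0] at hv2
      nlinarith
    have h1 : |f (t + δ) (t - δ * v) - f t (t - δ * v)| ≤ C' * δ :=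
      hnum (t - δ * v) (by linarith) (by linarith)
    have hD : |f (t + δ) t| = A := by rw [hAdef, abs_of_neg hDneg.1]
    rw [Real.norm_eq_abs, abs_abs, abs_div, hD]
    gcongr
  have hI := intervalIntegral.norm_integral_le_of_norm_le_const hpoint
  have habs : |t / δ - h₀ / δ| = (t - h₀) / δ := by
    rw [div_sub_div_same, abs_of_nonneg (div_nonneg (by linarith) hδ0.le)]
  calc (∫ v in (h₀ / δ)..(t / δ),
        |(f (t + δ) (t - δ * v) - f t (t - δ * v)) / f (t + δ) t|)
      ≤ ‖∫ v in (h₀ / δ)..(t / δ),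
        |(f (t + δ) (t - δ * v) - f t (t - δ * v)) / f (t + δ) t|‖ :=
        le_abs_self _
    _ ≤ C' * δ / A * |t / δ - h₀ / δ| := hI
    _ = C' * δ / A * ((t - h₀) / δ) := by rw [habs]
    _ = C' * (t - h₀) / A := by field_simp
    _ ≤ C' * 1 / A := by gcongr; linarith
    _ ≤ C' / (B * δ ^ q / δ) := by
        rw [mul_one]
        exact div_le_div_of_nonneg_left hC'0 hAB0 hAB
    _ = C' / B * δ ^ (1 - q) := by
        rw [Real.rpow_sub hδ0, Real.rpow_one]
        field_simp
    _ < ε := by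
        apply hδ₁
        rw [Real.dist_eq, sub_zero, abs_of_pos hδ0]
        exact hδδ₁
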